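/- For a composition μ = (μ_1,...,μ_r) of m, the map sending a sequence t of type μ (i.e. a finite word of length m in the alphabet {1,...,r} in which symbol i occurs exactly μ_i times) to the permutation w(t) ∈ S_m—obtained by replacing, for each i from 1 to r, the occurrences of i in t (read left to right) by the numbers μ_1+...+μ_i, μ_1+...+μ_i − 1, ..., μ_1+...+μ_{i-1}+1 in that decreasing order—is a bijection from the set R(μ) of sequences of type μ onto the set X_{J(μ)}^{-1} · w_{J(μ)}. -/

import Mathlib

/- Conventions: `W = S_m` is `Equiv.Perm (Fin m)` (0-based values, positions and symbols:
symbol `i` of the paper, `1 ≤ i ≤ r`, is `i - 1 : ℕ` here).  The paper product `ab` is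
`b * a` in Mathlib; in particular the paper element `x⁻¹ w_{J(μ)}` is `w0 * x⁻¹` here,
where `w0 = w_{J(μ)}` is characterised as the longest element of the Young subgroup.
Coxeter length = number of inversions. -/

def invLen {m : ℕ} (w : Equiv.Perm (Fin m)) : ℕ :=
  (Finset.univ.filter (fun p : Fin m × Fin m => p.1 < p.2 ∧ w p.2 < w p.1)).card

def inYoung {m : ℕ} (μ : Composition m) (u : Equiv.Perm (Fin m)) : Prop :=
  ∀ i : Fin m, μ.index (u i) = μ.index i

def isMinRep {m : ℕ} (μ : Composition m) (x : Equiv.Perm (Fin m)) : Prop :=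
  ∀ u : Equiv.Perm (Fin m), inYoung μ u → invLen x ≤ invLen (x * u)

/-- `t` is a sequence of type `μ`: a word of length `m` in the (0-based) symbols
`0, …, μ.length - 1`, in which symbol `k` occurs exactly `μ_k` times. -/
def ofTypeL {m : ℕ} (μ : Composition m) (t : List ℕ) : Prop :=
  t.length = m ∧ (∀ a ∈ t, a < μ.length) ∧
    ∀ k : Fin μ.length, t.count (k : ℕ) = μ.blocksFun k

/-- The value at position `p` of the permutation `w(t)` associated to a sequence `t` of
type `μ`: the occurrences of symbol `k` in `t`, read left to right, are replaced by the
members `μ₁+⋯+μ_{k+1} - 1, …, μ₁+⋯+μ_k` (0-based) of the `k`-th block of `μ`, in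
decreasing order. -/
def seqPermVal {m : ℕ} (μ : Composition m) (t : List ℕ) (p : ℕ) : ℕ :=
  μ.sizeUpTo (t.getD p 0 + 1) - 1 - (t.take p).count (t.getD p 0)

/-- `w = w(t)` for the sequence `t` of type `μ`. -/
def isSeqPerm {m : ℕ} (μ : Composition m) (t : List ℕ) (w : Equiv.Perm (Fin m)) : Prop :=
  ∀ p : Fin m, (w p : ℕ) = seqPermVal μ t (p : ℕ)

namespace Stmt2Aux
open Finset

variable {m : ℕ} {μ0 : Composition m}

variable (μ : Composition m)

lemma index_le_index {a b : Fin m} (h : a ≤ b) : μ.index a ≤ μ.index b := by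
  by_contra hc
  push_neg at hc
  have h1 : μ.sizeUpTo ((μ.index b : ℕ) + 1) ≤ μ.sizeUpTo (μ.index a) :=
    μ.monotone_sizeUpTo (by exact_mod_cast hc)
  have h2 := μ.sizeUpTo_index_le a
  have h3 := μ.lt_sizeUpTo_index_succ b
  simp only [Fin.val_succ] at h3
  omega

lemma lt_of_index_lt {a b : Fin m} (h : μ.index a < μ.index b) : a < b := by
  by_contra hc
  push_neg at hc
  exact absurd (index_le_index μ hc) (by omega)

lemma index_eq_of_mem {j : Fin m} {k : Fin μ.length}
    (h1 : μ.sizeUpTo k ≤ (j : ℕ)) (h2 : (j : ℕ) < μ.sizeUpTo ((k : ℕ) + 1)) :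
    μ.index j = k := by
  rcases lt_trichotomy (μ.index j) k with h | h | h
  · have : μ.sizeUpTo ((μ.index j : ℕ) + 1) ≤ μ.sizeUpTo k :=
      μ.monotone_sizeUpTo (by exact_mod_cast h)
    have h3 := μ.lt_sizeUpTo_index_succ j
    simp only [Fin.val_succ] at h3
    omega
  · exact h
  · have : μ.sizeUpTo ((k : ℕ) + 1) ≤ μ.sizeUpTo (μ.index j) :=
      μ.monotone_sizeUpTo (by exact_mod_cast h)
    have h2' := μ.sizeUpTo_index_le j
    omega


def invSet (w : Equiv.Perm (Fin m)) : Finset (Fin m × Fin m) :=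
  Finset.univ.filter (fun p : Fin m × Fin m => p.1 < p.2 ∧ w p.2 < w p.1)

lemma invLen_eq (w : Equiv.Perm (Fin m)) : invLen w = (invSet w).card := rfl

lemma mem_invSet {w : Equiv.Perm (Fin m)} {p : Fin m × Fin m} :
    p ∈ invSet w ↔ p.1 < p.2 ∧ w p.2 < w p.1 := by simp [invSet]

lemma eq_one_of_invLen_eq_zero {w : Equiv.Perm (Fin m)} (h : invLen w = 0) : w = 1 := by
  have hsm : StrictMono w := by
    intro a b hab
    have : (a, b) ∉ invSet w := by
      rw [invLen_eq] at h
      simp [Finset.card_eq_zero.mp h]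
    rw [mem_invSet] at this
    push_neg at this
    have hle := this hab
    have hne : w a ≠ w b := fun hc => absurd (w.injective hc) (ne_of_lt hab)
    exact lt_of_le_of_ne hle hne
  have : ⇑w = id := by
    have := (StrictMono.range_inj hsm (strictMono_id (α := Fin m))).mp
      (by rw [Set.range_id]; exact Set.range_eq_univ.mpr w.surjective)
    simpa using this
  ext i
  simp [show w i = id i from congrFun this i]


lemma idx_bounds (j : Fin m) : μ.sizeUpTo (μ.index j) ≤ (j : ℕ) ∧
    (j : ℕ) < μ.sizeUpTo ((μ.index j : ℕ) + 1) ∧ μ.sizeUpTo ((μ.index j : ℕ) + 1) ≤ m := by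
  refine ⟨μ.sizeUpTo_index_le j, ?_, μ.sizeUpTo_le _⟩
  have h := μ.lt_sizeUpTo_index_succ j
  simpa using h

lemma inYoung_inv {u : Equiv.Perm (Fin m)} (hu : inYoung μ u) : inYoung μ u⁻¹ := by
  intro i
  have := hu (u⁻¹ i)
  simpa using this.symm

lemma young_cross {u : Equiv.Perm (Fin m)} (hu : inYoung μ u) {a b : Fin m}
    (hab : a < b) (hne : μ.index a ≠ μ.index b) : u a < u b := by
  apply lt_of_index_lt μ
  rw [hu a, hu b]
  exact lt_of_le_of_ne (index_le_index μ hab.le) hne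

def revFun (j : Fin m) : Fin m :=
  ⟨μ.sizeUpTo (μ.index j) + μ.sizeUpTo ((μ.index j : ℕ) + 1) - 1 - (j : ℕ), by
    have h := idx_bounds μ j; omega⟩

lemma revFun_mem (j : Fin m) : μ.sizeUpTo (μ.index j) ≤ (revFun μ j : ℕ) ∧
    (revFun μ j : ℕ) < μ.sizeUpTo ((μ.index j : ℕ) + 1) := by
  have h := idx_bounds μ j
  simp only [revFun]
  omega

lemma index_revFun (j : Fin m) : μ.index (revFun μ j) = μ.index j := by
  have h := revFun_mem μ j
  exact index_eq_of_mem μ h.1 h.2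

lemma revFun_val (j : Fin m) : (revFun μ j : ℕ) =
    μ.sizeUpTo (μ.index j) + μ.sizeUpTo ((μ.index j : ℕ) + 1) - 1 - (j : ℕ) := rfl

lemma revFun_involutive : Function.Involutive (revFun μ) := by
  intro j
  have h1 := idx_bounds μ j
  have h3 := revFun_mem μ j
  apply Fin.ext
  rw [revFun_val μ (revFun μ j), index_revFun μ j, revFun_val μ j]
  omega

def rev : Equiv.Perm (Fin m) := (revFun_involutive μ).toPerm

lemma rev_apply (j : Fin m) : rev μ j = revFun μ j := rfl

lemma inYoung_rev : inYoung μ (rev μ) := fun j => index_revFun μ j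

lemma index_rev (j : Fin m) : μ.index (rev μ j) = μ.index j := index_revFun μ j

lemma rev_rev (j : Fin m) : rev μ (rev μ j) = j := revFun_involutive μ j

lemma rev_strictAnti {a b : Fin m} (hab : a < b) (h : μ.index a = μ.index b) :
    rev μ b < rev μ a := by
  have h1 := idx_bounds μ a
  have h2 := idx_bounds μ b
  rw [Fin.lt_def] at hab ⊢
  simp only [rev_apply, revFun, h]
  omega


def samePairs : Finset (Fin m × Fin m) :=
  Finset.univ.filter (fun p : Fin m × Fin m => p.1 < p.2 ∧ μ.index p.1 = μ.index p.2)

lemma invSet_subset_samePairs {u : Equiv.Perm (Fin m)} (hu : inYoung μ u) :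
    invSet u ⊆ samePairs μ := by
  intro p hp
  rw [mem_invSet] at hp
  simp only [samePairs, Finset.mem_filter, Finset.mem_univ, true_and]
  refine ⟨hp.1, ?_⟩
  by_contra hne
  exact absurd (young_cross μ hu hp.1 hne) (by omega)

lemma inYoung_mul {u v : Equiv.Perm (Fin m)} (hu : inYoung μ u) (hv : inYoung μ v) :
    inYoung μ (u * v) := by
  intro i
  simp only [Equiv.Perm.mul_apply]
  rw [hu (v i), hv i]

lemma inYoung_one : inYoung μ (1 : Equiv.Perm (Fin m)) := fun i => rfl

lemma invLen_one : invLen (1 : Equiv.Perm (Fin m)) = 0 := by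
  rw [invLen_eq]
  rw [Finset.card_eq_zero]
  ext p
  simp only [mem_invSet]
  simp only [Equiv.Perm.one_apply, Finset.notMem_empty, iff_false]
  omega

lemma card_invSet_mul_rev {u : Equiv.Perm (Fin m)} (hu : inYoung μ u) :
    (invSet (u * rev μ)).card = (samePairs μ \ invSet u).card := by
  apply Finset.card_nbij' (i := fun p => (rev μ p.2, rev μ p.1))
    (j := fun p => (rev μ p.2, rev μ p.1))
  · intro p hp
    have hpP := invSet_subset_samePairs μ (inYoung_mul μ hu (inYoung_rev μ)) hp
    rw [Finset.mem_coe, mem_invSet] at hp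
    simp only [samePairs, Finset.mem_filter, Finset.mem_univ, true_and] at hpP
    simp only [Finset.mem_coe, Finset.mem_sdiff, samePairs, Finset.mem_filter, Finset.mem_univ, true_and,
      mem_invSet]
    have hlt : rev μ p.2 < rev μ p.1 := rev_strictAnti μ hp.1 hpP.2
    refine ⟨⟨hlt, by rw [index_rev, index_rev, hpP.2]⟩, ?_⟩
    intro hcon
    have := hp.2
    simp only [Equiv.Perm.mul_apply] at this
    exact absurd hcon.2 (by exact not_lt.mpr this.le)
  · intro p hp
    simp only [Finset.mem_coe, Finset.mem_sdiff, samePairs, Finset.mem_filter, Finset.mem_univ, true_and,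
      mem_invSet] at hp
    obtain ⟨⟨h12, hidx⟩, hnot⟩ := hp
    push_neg at hnot
    have hne : u p.1 ≠ u p.2 := fun hc => absurd (u.injective hc) (ne_of_lt h12)
    have hult : u p.1 < u p.2 := lt_of_le_of_ne (hnot h12) hne
    rw [Finset.mem_coe, mem_invSet]
    refine ⟨rev_strictAnti μ h12 hidx, ?_⟩
    simp only [Equiv.Perm.mul_apply, rev_rev]
    exact hult
  · intro p _
    simp [rev_rev]
  · intro p _
    simp [rev_rev]

lemma young_compl {u : Equiv.Perm (Fin m)} (hu : inYoung μ u) :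
    invLen (u * rev μ) + invLen u = (samePairs μ).card := by
  rw [invLen_eq, invLen_eq, card_invSet_mul_rev μ hu]
  exact Finset.card_sdiff_add_card_eq_card (invSet_subset_samePairs μ hu)

lemma rev_inv : (rev μ)⁻¹ = rev μ := by
  ext j
  simp only [rev]
  rfl

theorem w0_eq_rev {w0 : Equiv.Perm (Fin m)} (hw0 : inYoung μ w0)
    (hw0max : ∀ u, inYoung μ u → invLen u ≤ invLen w0) : w0 = rev μ := by
  have h1 := young_compl μ hw0
  have h2 := young_compl μ (inYoung_one μ)
  rw [one_mul, invLen_one] at h2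
  have h3 := hw0max (rev μ) (inYoung_rev μ)
  have h4 : invLen (w0 * rev μ) = 0 := by omega
  have h5 := eq_one_of_invLen_eq_zero h4
  have : w0 = (rev μ)⁻¹ := by
    rw [← one_mul (rev μ)⁻¹, ← h5, mul_assoc, mul_inv_cancel, mul_one]
  rw [this, rev_inv]


lemma minRep_of_incr {x : Equiv.Perm (Fin m)}
    (hx : ∀ a b : Fin m, a < b → μ.index a = μ.index b → x a < x b) : isMinRep μ x := by
  intro u hu
  rw [invLen_eq, invLen_eq]
  apply Finset.card_le_card_of_injOn (fun r => (u⁻¹ r.1, u⁻¹ r.2))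
  · intro r hr
    rw [Finset.mem_coe, mem_invSet] at hr
    have hne : μ.index r.1 ≠ μ.index r.2 := by
      intro h
      exact absurd (hx r.1 r.2 hr.1 h) (by have := hr.2; omega)
    have hlt : μ.index r.1 < μ.index r.2 :=
      lt_of_le_of_ne (index_le_index μ hr.1.le) hne
    have hui := inYoung_inv μ hu
    rw [Finset.mem_coe, mem_invSet]
    constructor
    · apply lt_of_index_lt μ
      rw [hui r.1, hui r.2]
      exact hlt
    · simp only [Equiv.Perm.mul_apply, Equiv.Perm.inv_def, Equiv.apply_symm_apply]
      exact hr.2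
  · intro r _ r' _ h
    simp only [Prod.mk.injEq] at h
    exact Prod.ext (u⁻¹.injective h.1) (u⁻¹.injective h.2)

lemma swap_lt {p q a b : Fin m} (hq : (q : ℕ) = (p : ℕ) + 1) (hab : a < b)
    (hne : ¬(a = p ∧ b = q)) : Equiv.swap p q a < Equiv.swap p q b := by
  have hab' : (a : ℕ) < (b : ℕ) := hab
  rw [Fin.lt_def]
  rcases eq_or_ne a p with rfl | hap
  · have hbq : b ≠ q := fun h => hne ⟨rfl, h⟩
    have hbp : b ≠ a := ne_of_gt hab
    rw [Equiv.swap_apply_left, Equiv.swap_apply_of_ne_of_ne hbp hbq]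
    have h2 : (b : ℕ) ≠ (q : ℕ) := fun h => hbq (Fin.ext h)
    omega
  · rcases eq_or_ne a q with rfl | haq
    · have hbq : b ≠ a := ne_of_gt hab
      have hbp : b ≠ p := by
        intro h
        subst h
        omega
      rw [Equiv.swap_apply_right, Equiv.swap_apply_of_ne_of_ne hbp hbq]
      omega
    · rw [Equiv.swap_apply_of_ne_of_ne hap haq]
      rcases eq_or_ne b p with rfl | hbp
      · rw [Equiv.swap_apply_left]
        omega
      · rcases eq_or_ne b q with rfl | hbq
        · rw [Equiv.swap_apply_right]
          have h2 : (a : ℕ) ≠ (p : ℕ) := fun h => hap (Fin.ext h)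
          omega
        · rw [Equiv.swap_apply_of_ne_of_ne hbp hbq]
          exact hab'

lemma invLen_mul_swap {x : Equiv.Perm (Fin m)} {p q : Fin m} (hq : (q : ℕ) = (p : ℕ) + 1)
    (hdesc : x q < x p) : invLen (x * Equiv.swap p q) < invLen x := by
  set s := Equiv.swap p q with hs
  have hpq : p < q := by rw [Fin.lt_def]; omega
  have hmem : (p, q) ∈ invSet x := by rw [mem_invSet]; exact ⟨hpq, hdesc⟩
  have hcard : (invSet (x * s)).card = ((invSet x).erase (p, q)).card := by
    apply Finset.card_nbij' (i := fun r => (s r.1, s r.2)) (j := fun r => (s r.1, s r.2))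
    · intro r hr
      rw [Finset.mem_coe, mem_invSet] at hr
      have hrne : ¬(r.1 = p ∧ r.2 = q) := by
        rintro ⟨h1, h2⟩
        have := hr.2
        rw [h1, h2] at this
        simp only [Equiv.Perm.mul_apply, hs, Equiv.swap_apply_left, Equiv.swap_apply_right]
          at this
        omega
      have hlt : s r.1 < s r.2 := swap_lt hq hr.1 hrne
      rw [Finset.mem_coe, Finset.mem_erase, mem_invSet]
      refine ⟨?_, hlt, ?_⟩
      · intro hcon
        rw [Prod.mk.injEq] at hcon
        have h1 : r.1 = q := by
          have := congrArg s hcon.1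
          simpa [hs, Equiv.swap_apply_self, Equiv.swap_apply_left] using this
        have h2 : r.2 = p := by
          have := congrArg s hcon.2
          simpa [hs, Equiv.swap_apply_self, Equiv.swap_apply_right] using this
        rw [h1, h2] at hr
        have := hr.1
        rw [Fin.lt_def] at this
        omega
      · have := hr.2
        simpa only [Equiv.Perm.mul_apply] using this
    · intro r hr
      rw [Finset.mem_coe, Finset.mem_erase, mem_invSet] at hr
      have hrne : ¬(r.1 = p ∧ r.2 = q) := by
        rintro ⟨h1, h2⟩
        exact hr.1 (Prod.ext h1 h2)
      rw [Finset.mem_coe, mem_invSet]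
      refine ⟨swap_lt hq hr.2.1 hrne, ?_⟩
      simp only [Equiv.Perm.mul_apply, hs, Equiv.swap_apply_self]
      exact hr.2.2
    · intro r _
      simp [hs, Equiv.swap_apply_self]
    · intro r _
      simp [hs, Equiv.swap_apply_self]
  rw [invLen_eq, invLen_eq, hcard, Finset.card_erase_of_mem hmem]
  have hpos : 0 < (invSet x).card := Finset.card_pos.mpr ⟨(p, q), hmem⟩
  omega

lemma incr_adj_of_minRep {x : Equiv.Perm (Fin m)} (hx : isMinRep μ x) {p q : Fin m}
    (hq : (q : ℕ) = (p : ℕ) + 1) (hidx : μ.index p = μ.index q) : x p < x q := by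
  by_contra hc
  push_neg at hc
  have hpq : p ≠ q := by intro h; rw [h] at hq; omega
  have hdesc : x q < x p :=
    lt_of_le_of_ne hc (fun h => hpq (x.injective h.symm))
  have hyoung : inYoung μ (Equiv.swap p q) := by
    intro i
    rcases eq_or_ne i p with rfl | hip
    · rw [Equiv.swap_apply_left, ← hidx]
    · rcases eq_or_ne i q with rfl | hiq
      · rw [Equiv.swap_apply_right, hidx]
      · rw [Equiv.swap_apply_of_ne_of_ne hip hiq]
  exact absurd (hx _ hyoung) (by have := invLen_mul_swap hq hdesc; omega)

lemma incr_of_minRep {x : Equiv.Perm (Fin m)} (hx : isMinRep μ x) :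
    ∀ a b : Fin m, a < b → μ.index a = μ.index b → x a < x b := by
  have key : ∀ d : ℕ, ∀ a b : Fin m, (b : ℕ) = (a : ℕ) + d + 1 →
      μ.index a = μ.index b → x a < x b := by
    intro d
    induction d with
    | zero => intro a b hab hidx; exact incr_adj_of_minRep μ hx (by omega) hidx
    | succ d ih =>
        intro a b hab hidx
        have hcm : (a : ℕ) + d + 1 < m := by have := b.isLt; omega
        set c : Fin m := ⟨(a : ℕ) + d + 1, hcm⟩ with hc
        have hac : a ≤ c := by rw [Fin.le_def]; simp [hc]; omega
        have hcb : c ≤ b := by rw [Fin.le_def]; simp [hc]; omega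
        have h1 : μ.index a = μ.index c :=
          le_antisymm (index_le_index μ hac) (hidx ▸ index_le_index μ hcb)
        have h2 : μ.index c = μ.index b := by rw [← h1, hidx]
        exact lt_trans (ih a c (by simp [hc]) h1)
          (incr_adj_of_minRep μ hx (by simp [hc]; omega) h2)
  intro a b hab hidx
  have : (b : ℕ) = (a : ℕ) + ((b : ℕ) - (a : ℕ) - 1) + 1 := by
    have : (a : ℕ) < (b : ℕ) := hab
    omega
  exact key _ a b this hidx


lemma count_take_eq_card {t : List ℕ} (ht : t.length = m) {p : ℕ} (hp : p ≤ m) (k : ℕ) :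
    (t.take p).count k =
      (Finset.univ.filter fun q : Fin m => (q : ℕ) < p ∧ t.getD (q : ℕ) 0 = k).card := by
  induction p with
  | zero => simp
  | succ p ih =>
      have hpm : p < m := by omega
      have hplen : p < t.length := by omega
      have htake : t.take (p + 1) = t.take p ++ [t[p]] := by
        rw [List.take_succ, List.getElem?_eq_getElem hplen]
        rfl
      have hgetD : t.getD p 0 = t[p] := List.getD_eq_getElem _ _ hplen
      have hsplit : (Finset.univ.filter fun q : Fin m => (q : ℕ) < p + 1 ∧ t.getD (q : ℕ) 0 = k)
          = (Finset.univ.filter fun q : Fin m => (q : ℕ) < p ∧ t.getD (q : ℕ) 0 = k)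
            ∪ (Finset.univ.filter fun q : Fin m => (q : ℕ) = p ∧ t.getD (q : ℕ) 0 = k) := by
        rw [← Finset.filter_or]
        apply Finset.filter_congr
        intro q _
        constructor
        · rintro ⟨h1, h2⟩
          rcases Nat.lt_or_ge (q : ℕ) p with h | h
          · exact Or.inl ⟨h, h2⟩
          · exact Or.inr ⟨by omega, h2⟩
        · rintro (⟨h1, h2⟩ | ⟨h1, h2⟩) <;> exact ⟨by omega, h2⟩
      have hdisj : Disjoint
          (Finset.univ.filter fun q : Fin m => (q : ℕ) < p ∧ t.getD (q : ℕ) 0 = k)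
          (Finset.univ.filter fun q : Fin m => (q : ℕ) = p ∧ t.getD (q : ℕ) 0 = k) := by
        rw [Finset.disjoint_filter]
        intro q _ h1 h2
        omega
      rw [htake, List.count_append, hsplit, Finset.card_union_of_disjoint hdisj, ← ih (by omega)]
      congr 1
      by_cases hk : t[p] = k
      · have : (Finset.univ.filter fun q : Fin m => (q : ℕ) = p ∧ t.getD (q : ℕ) 0 = k)
            = {(⟨p, hpm⟩ : Fin m)} := by
          ext q
          simp only [Finset.mem_filter, Finset.mem_univ, true_and, Finset.mem_singleton]
          constructor
          · rintro ⟨h1, _⟩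
            exact Fin.ext h1
          · rintro rfl
            exact ⟨rfl, by rw [hgetD]; exact hk⟩
        rw [this]
        simp [List.count_cons, hk]
      · have : (Finset.univ.filter fun q : Fin m => (q : ℕ) = p ∧ t.getD (q : ℕ) 0 = k)
            = ∅ := by
          ext q
          simp only [Finset.mem_filter, Finset.mem_univ, true_and, Finset.notMem_empty,
            iff_false, not_and]
          rintro rfl
          rw [hgetD]
          exact hk
        rw [this]
        simp [List.count_cons, hk]

lemma count_eq_card {t : List ℕ} (ht : t.length = m) (k : ℕ) :
    t.count k = (Finset.univ.filter fun q : Fin m => t.getD (q : ℕ) 0 = k).card := by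
  have h := count_take_eq_card ht (le_refl m) k
  rw [← ht, List.take_length, ht] at h
  rw [h]
  congr 1
  apply Finset.filter_congr
  intro q _
  simp [q.isLt]

lemma card_block (k : Fin μ.length) :
    (Finset.univ.filter fun j : Fin m => μ.index j = k).card = μ.blocksFun k := by
  have hle : μ.sizeUpTo ((k : ℕ) + 1) ≤ m := μ.sizeUpTo_le _
  have hcard : (Finset.Ico (μ.sizeUpTo k) (μ.sizeUpTo ((k : ℕ) + 1))).card
      = μ.blocksFun k := by
    rw [Nat.card_Ico]
    have := μ.sizeUpTo_succ' k
    omega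
  rw [← hcard]
  apply Finset.card_nbij (i := fun j : Fin m => (j : ℕ))
  · intro j hj
    rw [Finset.mem_coe, Finset.mem_filter] at hj
    rw [Finset.mem_coe, Finset.mem_Ico, ← hj.2]
    exact ⟨μ.sizeUpTo_index_le j, by simpa using μ.lt_sizeUpTo_index_succ j⟩
  · intro a _ b _ h
    exact Fin.ext h
  · intro a ha
    simp only [Finset.coe_Ico, Set.mem_Ico] at ha
    refine ⟨⟨a, by omega⟩, ?_, rfl⟩
    simp only [Finset.mem_coe, Finset.mem_filter]
    exact ⟨Finset.mem_univ _, index_eq_of_mem μ ha.1 ha.2⟩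

lemma cnt_lt {t : List ℕ} (htlen : t.length = m) (p : Fin m) :
    (t.take (p : ℕ)).count (t.getD (p : ℕ) 0) < t.count (t.getD (p : ℕ) 0) := by
  rw [count_take_eq_card htlen (le_of_lt p.isLt), count_eq_card htlen]
  apply Finset.card_lt_card
  constructor
  · intro q hq
    rw [Finset.mem_filter] at hq ⊢
    exact ⟨hq.1, hq.2.2⟩
  · intro hsub
    have hp : p ∈ Finset.univ.filter fun q : Fin m => t.getD (q : ℕ) 0 = t.getD (p : ℕ) 0 := by
      simp
    have := hsub hp
    simp only [Finset.mem_filter, Finset.mem_univ, true_and] at this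
    omega

lemma cnt_strict {t : List ℕ} (htlen : t.length = m) {p q : Fin m} (hpq : p < q)
    (hk : t.getD (p : ℕ) 0 = t.getD (q : ℕ) 0) :
    (t.take (p : ℕ)).count (t.getD (p : ℕ) 0) < (t.take (q : ℕ)).count (t.getD (q : ℕ) 0) := by
  rw [count_take_eq_card htlen (le_of_lt p.isLt), count_take_eq_card htlen (le_of_lt q.isLt)]
  apply Finset.card_lt_card
  constructor
  · intro r hr
    rw [Finset.mem_filter] at hr ⊢
    rw [Fin.lt_def] at hpq
    exact ⟨hr.1, by omega, hr.2.2.trans hk⟩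
  · intro hsub
    have hp : p ∈ Finset.univ.filter
        fun r : Fin m => (r : ℕ) < (q : ℕ) ∧ t.getD (r : ℕ) 0 = t.getD (q : ℕ) 0 := by
      simp only [Finset.mem_filter, Finset.mem_univ, true_and]
      exact ⟨hpq, hk⟩
    have := hsub hp
    simp only [Finset.mem_filter, Finset.mem_univ, true_and] at this
    omega

lemma part1 {t : List ℕ} (ht : ofTypeL μ t) :
    ∃ x, isMinRep μ x ∧ isSeqPerm μ t (rev μ * x⁻¹) := by
  obtain ⟨htlen, htlt, htcount⟩ := ht
  have hk : ∀ p : Fin m, t.getD (p : ℕ) 0 < μ.length := by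
    intro p
    have hplen : (p : ℕ) < t.length := by omega
    rw [List.getD_eq_getElem _ _ hplen]
    exact htlt _ (List.getElem_mem hplen)
  have hcnt_lt : ∀ p : Fin m,
      (t.take (p : ℕ)).count (t.getD (p : ℕ) 0) < μ.blocksFun ⟨t.getD (p : ℕ) 0, hk p⟩ := by
    intro p
    have := cnt_lt htlen p
    rwa [htcount ⟨t.getD (p : ℕ) 0, hk p⟩] at this
  have hEB : ∀ p : Fin m, μ.sizeUpTo (t.getD (p : ℕ) 0 + 1)
      = μ.sizeUpTo (t.getD (p : ℕ) 0) + μ.blocksFun ⟨t.getD (p : ℕ) 0, hk p⟩ :=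
    fun p => μ.sizeUpTo_succ' ⟨t.getD (p : ℕ) 0, hk p⟩
  have hbnd : ∀ p : Fin m, μ.sizeUpTo (t.getD (p : ℕ) 0) ≤ seqPermVal μ t (p : ℕ) ∧
      seqPermVal μ t (p : ℕ) < μ.sizeUpTo (t.getD (p : ℕ) 0 + 1) ∧
      μ.sizeUpTo (t.getD (p : ℕ) 0 + 1) ≤ m := by
    intro p
    have h1 := hcnt_lt p
    have h2 := hEB p
    have h3 : μ.sizeUpTo (t.getD (p : ℕ) 0 + 1) ≤ m := μ.sizeUpTo_le _
    unfold seqPermVal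
    omega
  set f : Fin m → Fin m := fun p => ⟨seqPermVal μ t (p : ℕ), lt_of_lt_of_le (hbnd p).2.1
    (hbnd p).2.2⟩ with hf
  have hidx : ∀ p : Fin m, μ.index (f p) = ⟨t.getD (p : ℕ) 0, hk p⟩ := by
    intro p
    exact index_eq_of_mem μ (hbnd p).1 (hbnd p).2.1
  have hval_eq : ∀ p q : Fin m, f p = f q → p = q := by
    intro p q hfpq
    by_contra hne
    have hKeq : t.getD (p : ℕ) 0 = t.getD (q : ℕ) 0 := by
      have := (hidx p).symm.trans (hfpq ▸ hidx q)
      exact congrArg Fin.val this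
    have hveq : seqPermVal μ t (p : ℕ) = seqPermVal μ t (q : ℕ) :=
      congrArg Fin.val hfpq
    have hceq : (t.take (p : ℕ)).count (t.getD (p : ℕ) 0)
        = (t.take (q : ℕ)).count (t.getD (q : ℕ) 0) := by
      have h1 := hcnt_lt p
      have h2 := hcnt_lt q
      have h3 := hEB p
      have h4 := hEB q
      have hBeq : μ.sizeUpTo (t.getD (p : ℕ) 0 + 1) = μ.sizeUpTo (t.getD (q : ℕ) 0 + 1) := by
        rw [hKeq]
      have hFeq : μ.blocksFun ⟨t.getD (p : ℕ) 0, hk p⟩ = μ.blocksFun ⟨t.getD (q : ℕ) 0, hk q⟩ := by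
        congr 1
        exact Fin.ext hKeq
      unfold seqPermVal at hveq
      omega
    rcases lt_trichotomy p q with h | h | h
    · have := cnt_strict htlen h hKeq
      omega
    · exact hne h
    · have := cnt_strict htlen h hKeq.symm
      omega
  have hinj : Function.Injective f := fun p q h => hval_eq p q h
  let w : Equiv.Perm (Fin m) := Equiv.ofBijective f (Finite.injective_iff_bijective.mp hinj)
  have hw : ∀ p, w p = f p := fun p => rfl
  refine ⟨w⁻¹ * rev μ, ?_, ?_⟩
  · apply minRep_of_incr
    intro a b hab hidxab
    have hanti : ∀ u v : Fin m, u < v → μ.index u = μ.index v → w⁻¹ v < w⁻¹ u := by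
      intro u v huv hidxuv
      set P := w⁻¹ u with hP
      set Q := w⁻¹ v with hQ
      have hfP : f P = u := by rw [← hw]; simp [hP]
      have hfQ : f Q = v := by rw [← hw]; simp [hQ]
      have hKeq : t.getD (P : ℕ) 0 = t.getD (Q : ℕ) 0 := by
        have h1 := hidx P
        have h2 := hidx Q
        rw [hfP] at h1
        rw [hfQ] at h2
        have := h1.symm.trans (hidxuv.trans h2)
        exact congrArg Fin.val this
      have hvlt : seqPermVal μ t (P : ℕ) < seqPermVal μ t (Q : ℕ) := by
        have : (u : ℕ) < (v : ℕ) := huv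
        rw [← hfP, ← hfQ] at this
        exact this
      rcases lt_trichotomy P Q with h | h | h
      · exfalso
        have hcs := cnt_strict htlen h hKeq
        have h1 := hcnt_lt Q
        have h3 := hEB P
        have h4 := hEB Q
        have hBeq : μ.sizeUpTo (t.getD (P : ℕ) 0 + 1)
            = μ.sizeUpTo (t.getD (Q : ℕ) 0 + 1) := by rw [hKeq]
        unfold seqPermVal at hvlt
        omega
      · exfalso
        rw [h] at hvlt
        omega
      · exact h
    have h1 : rev μ b < rev μ a := rev_strictAnti μ hab hidxab
    have h2 : μ.index (rev μ b) = μ.index (rev μ a) := by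
      rw [index_rev, index_rev, hidxab]
    exact hanti (rev μ b) (rev μ a) h1 h2
  · intro p
    have : (rev μ * (w⁻¹ * rev μ)⁻¹) = w := by
      rw [mul_inv_rev, inv_inv, ← mul_assoc, mul_inv_cancel, one_mul]
    rw [this, hw]



lemma part2 {x : Equiv.Perm (Fin m)} (hx : isMinRep μ x) :
    ∃! t : List ℕ, ofTypeL μ t ∧ isSeqPerm μ t (rev μ * x⁻¹) := by
  set w : Equiv.Perm (Fin m) := rev μ * x⁻¹ with hwdef
  have hidxw : ∀ p : Fin m, μ.index (w p) = μ.index (x⁻¹ p) := by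
    intro p
    simp only [hwdef, Equiv.Perm.mul_apply]
    exact index_rev μ (x⁻¹ p)
  have hincr := incr_of_minRep μ hx
  have hanti : ∀ p q : Fin m, p < q → μ.index (w p) = μ.index (w q) → w q < w p := by
    intro p q hpq hidxpq
    have hab : μ.index (x⁻¹ p) = μ.index (x⁻¹ q) := by
      rw [← hidxw p, ← hidxw q, hidxpq]
    rcases lt_trichotomy (x⁻¹ p) (x⁻¹ q) with h | h | h
    · simp only [hwdef, Equiv.Perm.mul_apply]
      exact rev_strictAnti μ h hab
    · exfalso
      have : p = q := by
        have := congrArg x h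
        simpa using this
      exact absurd this (ne_of_lt hpq)
    · exfalso
      have := hincr _ _ h hab.symm
      simp only [Equiv.Perm.inv_def, Equiv.apply_symm_apply] at this
      exact absurd hpq (by omega)
  set t : List ℕ := List.ofFn (fun p : Fin m => (μ.index (w p) : ℕ)) with htdef
  have htlen : t.length = m := by simp [htdef]
  have hgetD : ∀ p : Fin m, t.getD (p : ℕ) 0 = (μ.index (w p) : ℕ) := by
    intro p
    rw [List.getD_eq_getElem _ _ (by omega)]
    simp [htdef]
  have hofType : ofTypeL μ t := by
    refine ⟨htlen, ?_, ?_⟩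
    · intro a ha
      rw [htdef, List.mem_ofFn] at ha
      obtain ⟨p, hp⟩ := ha
      rw [← hp]
      exact (μ.index (w p)).isLt
    · intro k
      rw [count_eq_card htlen]
      have hcongr : (Finset.univ.filter fun q : Fin m => t.getD (q : ℕ) 0 = (k : ℕ))
          = Finset.univ.filter fun q : Fin m => μ.index (w q) = k := by
        apply Finset.filter_congr
        intro q _
        rw [hgetD q]
        constructor
        · intro h; exact Fin.ext h
        · intro h; rw [h]
      rw [hcongr, ← card_block μ k]
      apply Finset.card_nbij (i := fun q => w q)
      · intro q hq
        rw [Finset.mem_coe, Finset.mem_filter] at hq ⊢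
        exact ⟨Finset.mem_univ _, hq.2⟩
      · intro a _ b _ h
        exact w.injective h
      · intro j hj
        simp only [Finset.mem_coe, Finset.mem_filter] at hj
        refine ⟨w⁻¹ j, ?_, by simp⟩
        simp only [Finset.mem_coe, Finset.mem_filter]
        refine ⟨Finset.mem_univ _, ?_⟩
        simp only [Equiv.Perm.inv_def, Equiv.apply_symm_apply]
        exact hj.2
  have hseq : isSeqPerm μ t w := by
    intro p
    set k : Fin μ.length := μ.index (w p) with hkdef
    have hwpbnd : μ.sizeUpTo (k : ℕ) ≤ (w p : ℕ) ∧ (w p : ℕ) < μ.sizeUpTo ((k : ℕ) + 1) := by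
      have h := idx_bounds μ (w p)
      rw [← hkdef] at h
      exact ⟨h.1, h.2.1⟩
    have hszle : μ.sizeUpTo ((k : ℕ) + 1) ≤ m := μ.sizeUpTo_le _
    have hcnt : (t.take (p : ℕ)).count (t.getD (p : ℕ) 0)
        = μ.sizeUpTo ((k : ℕ) + 1) - 1 - (w p : ℕ) := by
      rw [count_take_eq_card htlen (le_of_lt p.isLt)]
      have hcongr : (Finset.univ.filter fun q : Fin m =>
            (q : ℕ) < (p : ℕ) ∧ t.getD (q : ℕ) 0 = t.getD (p : ℕ) 0)
          = Finset.univ.filter fun q : Fin m =>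
            (q : ℕ) < (p : ℕ) ∧ μ.index (w q) = k := by
        apply Finset.filter_congr
        intro q _
        rw [hgetD q, hgetD p, ← hkdef]
        constructor
        · rintro ⟨h1, h2⟩; exact ⟨h1, Fin.ext h2⟩
        · rintro ⟨h1, h2⟩; exact ⟨h1, by rw [h2]⟩
      rw [hcongr]
      have hbij : (Finset.univ.filter fun q : Fin m =>
            (q : ℕ) < (p : ℕ) ∧ μ.index (w q) = k).card
          = (Finset.Ico ((w p : ℕ) + 1) (μ.sizeUpTo ((k : ℕ) + 1))).card := by
        apply Finset.card_nbij (i := fun q => (w q : ℕ))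
        · intro q hq
          rw [Finset.mem_coe, Finset.mem_filter] at hq
          obtain ⟨_, hq1, hq2⟩ := hq
          have hlt : w p < w q := by
            apply hanti q p (by rw [Fin.lt_def]; exact hq1)
            rw [hq2, hkdef]
          simp only [Finset.mem_coe, Finset.mem_Ico]
          have hb := idx_bounds μ (w q)
          rw [hq2] at hb
          exact ⟨by omega, hb.2.1⟩
        · intro a ha b hb h
          exact w.injective (Fin.ext h)
        · intro a ha
          simp only [Finset.coe_Ico, Set.mem_Ico] at ha
          have ham : a < m := by omega
          have hvala : ((⟨a, ham⟩ : Fin m) : ℕ) = a := rfl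
          have hidxa : μ.index (⟨a, ham⟩ : Fin m) = k := by
            apply index_eq_of_mem μ
            · rw [hvala]
              have := hwpbnd.1
              omega
            · rw [hvala]
              omega
          refine ⟨w⁻¹ ⟨a, ham⟩, ?_, by simp⟩
          simp only [Finset.mem_coe, Finset.mem_filter]
          refine ⟨Finset.mem_univ _, ?_, ?_⟩
          · have hne : w⁻¹ ⟨a, ham⟩ ≠ p := by
              intro h
              have h2 : w p = ⟨a, ham⟩ := by rw [← h]; simp
              have h3 := congrArg Fin.val h2
              rw [hvala] at h3
              omega
            rcases lt_trichotomy (w⁻¹ ⟨a, ham⟩) p with h | h | h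
            · exact h
            · exact absurd h hne
            · exfalso
              have h4 := hanti p (w⁻¹ ⟨a, ham⟩) h
                (by simp only [Equiv.Perm.inv_def, Equiv.apply_symm_apply]; rw [hidxa, hkdef])
              simp only [Equiv.Perm.inv_def, Equiv.apply_symm_apply] at h4
              rw [Fin.lt_def] at h4
              rw [hvala] at h4
              omega
          · simp only [Equiv.Perm.inv_def, Equiv.apply_symm_apply]
            exact hidxa
      rw [hbij, Nat.card_Ico]
      omega
    unfold seqPermVal
    rw [hcnt, hgetD p, ← hkdef]
    omega
  refine ⟨t, ⟨hofType, hseq⟩, ?_⟩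
  intro t' ht'
  obtain ⟨⟨hlen', hlt', hcount'⟩, hseq'⟩ := ht'
  apply List.ext_getElem (by rw [hlen', htlen])
  intro p hp1 hp2
  have hpm : p < m := by omega
  have hpfval : ((⟨p, hpm⟩ : Fin m) : ℕ) = p := rfl
  have hk' : t'.getD p 0 < μ.length := by
    rw [List.getD_eq_getElem _ _ (by omega)]
    exact hlt' _ (List.getElem_mem (by omega))
  have hcnt' : (t'.take p).count (t'.getD p 0) < μ.blocksFun ⟨t'.getD p 0, hk'⟩ := by
    have h := cnt_lt hlen' ⟨p, hpm⟩
    rw [hpfval] at h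
    rwa [hcount' ⟨t'.getD p 0, hk'⟩] at h
  have hEB' : μ.sizeUpTo (t'.getD p 0 + 1)
      = μ.sizeUpTo (t'.getD p 0) + μ.blocksFun ⟨t'.getD p 0, hk'⟩ :=
    μ.sizeUpTo_succ' ⟨t'.getD p 0, hk'⟩
  have hv' := hseq' ⟨p, hpm⟩
  rw [hpfval] at hv'
  unfold seqPermVal at hv'
  have hidxwp : μ.index (w ⟨p, hpm⟩) = ⟨t'.getD p 0, hk'⟩ := by
    apply index_eq_of_mem μ
    · show μ.sizeUpTo (t'.getD p 0) ≤ _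
      rw [hv']
      omega
    · show _ < μ.sizeUpTo (t'.getD p 0 + 1)
      rw [hv']
      omega
  have ht'p : t'[p] = (μ.index (w ⟨p, hpm⟩) : ℕ) := by
    rw [hidxwp]
    rw [← List.getD_eq_getElem t' 0 (show p < t'.length by omega)]
  have htp : t[p] = (μ.index (w ⟨p, hpm⟩) : ℕ) := by
    rw [← List.getD_eq_getElem t 0 (show p < t.length by omega)]
    have h := hgetD ⟨p, hpm⟩
    rw [hpfval] at h
    exact h
  rw [ht'p, htp]
end Stmt2Aux

theorem stmt2 (m : ℕ) (μ : Composition m) (w0 : Equiv.Perm (Fin m))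
    (hw0 : inYoung μ w0) (hw0max : ∀ u, inYoung μ u → invLen u ≤ invLen w0) :
    (∀ t : List ℕ, ofTypeL μ t → ∃ x, isMinRep μ x ∧ isSeqPerm μ t (w0 * x⁻¹)) ∧
    (∀ x, isMinRep μ x → ∃! t : List ℕ, ofTypeL μ t ∧ isSeqPerm μ t (w0 * x⁻¹)) := by
  have hrev := Stmt2Aux.w0_eq_rev μ hw0 hw0max
  constructor
  · intro t ht
    obtain ⟨x, hx1, hx2⟩ := Stmt2Aux.part1 μ ht
    exact ⟨x, hx1, by rw [hrev]; exact hx2⟩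
  · intro x hx
    rw [hrev]
    exact Stmt2Aux.part2 μ hx
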